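/- For any positive integer n and any vector s = (s_1,...,s_n) of nonnegative integers, the following identity holds: ∏_{i=1}^{n-1} (1 + ∑_{r=n-i+1}^{n} s_r) = ∑_{j} M(s_n+1, j_1) M(s_{n-1}-1, j_2) ··· M(s_2-1, j_{n-1}) · ∏_{i=1}^{n-1} (j_1 + ··· + j_i - i + 1), where M(m,k) = C(m+k-1, k) is the number of multisets of size k from a set of size m (interpreted via the generalized binomial, possibly negative when m ≤ 0), and the sum is over weak compositions j = (j_1,...,j_{n-1}) of n-1 with j_1 + ··· + j_i ≥ i for all i. -/

import Mathlib

open Finset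


lemma mc_shift (z : ℤ) (k : ℕ) :
    ((k : ℤ) + 1) * Ring.multichoose z (k + 1) = z * Ring.multichoose (z + 1) k := by
  apply nsmul_right_injective (Nat.factorial_ne_zero k)
  simp only
  have h1 : (Nat.factorial k) • (((k : ℤ) + 1) * Ring.multichoose z (k + 1))
      = (Nat.factorial (k+1)) • Ring.multichoose z (k + 1) := by
    rw [Nat.factorial_succ]
    push_cast [nsmul_eq_mul]
    ring
  rw [h1, Ring.factorial_nsmul_multichoose_eq_ascPochhammer]
  have h2 : (Nat.factorial k) • (z * Ring.multichoose (z + 1) k)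
      = z * ((Nat.factorial k) • Ring.multichoose (z + 1) k) := by
    simp [nsmul_eq_mul]; ring
  rw [h2, Ring.factorial_nsmul_multichoose_eq_ascPochhammer]
  rw [Polynomial.ascPochhammer_smeval_eq_eval, Polynomial.ascPochhammer_smeval_eq_eval,
    ascPochhammer_succ_left]
  simp [Polynomial.eval_comp]


lemma vdm_step (x y : ℤ) (k : ℕ) :
    ∑ p ∈ Finset.HasAntidiagonal.antidiagonal (k+1), Ring.multichoose (x+1) p.1 * Ring.multichoose y p.2
    = (∑ p ∈ Finset.HasAntidiagonal.antidiagonal (k+1), Ring.multichoose x p.1 * Ring.multichoose y p.2)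
      + ∑ p ∈ Finset.HasAntidiagonal.antidiagonal k, Ring.multichoose (x+1) p.1 * Ring.multichoose y p.2 := by
  rw [Finset.Nat.sum_antidiagonal_succ (f := fun p => Ring.multichoose (x+1) p.1 * Ring.multichoose y p.2),
    Finset.Nat.sum_antidiagonal_succ (f := fun p => Ring.multichoose x p.1 * Ring.multichoose y p.2)]
  simp only [Ring.multichoose_zero_right, Ring.multichoose_succ_succ, add_mul]
  rw [Finset.sum_add_distrib]
  ring

lemma vandermonde (k : ℕ) (x y : ℤ) :
    ∑ p ∈ Finset.HasAntidiagonal.antidiagonal k, Ring.multichoose x p.1 * Ring.multichoose y p.2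
    = Ring.multichoose (x + y) k := by
  induction k generalizing x y with
  | zero => simp
  | succ k ih =>
    induction x using Int.induction_on with
    | zero =>
      rw [Finset.Nat.sum_antidiagonal_succ]
      simp [Ring.multichoose_zero_succ, Ring.multichoose_zero_right]
    | succ i ihp =>
      rw [vdm_step, ihp, ih]
      rw [show (i:ℤ) + 1 + y = (i + y) + 1 by ring, Ring.multichoose_succ_succ]
    | pred i ihn =>
      have h := vdm_step (-(i:ℤ) - 1) y k
      rw [show -(i:ℤ) - 1 + 1 = -i by ring] at h
      have h2 : Ring.multichoose (-(i:ℤ) + y) (k+1)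
          = Ring.multichoose (-(i:ℤ) - 1 + y) (k+1) + Ring.multichoose (-(i:ℤ) + y) k := by
        have := Ring.multichoose_succ_succ (-(i:ℤ) - 1 + y) k
        rw [show -(i:ℤ) - 1 + y + 1 = -i + y by ring] at this
        exact this
      rw [ihn, ih] at h
      linarith [h, h2]


lemma Iic_castSucc_eq {m : ℕ} (i : Fin m) :
    Finset.Iic (Fin.castSucc i) = (Finset.Iic i).map Fin.castSuccEmb := by
  ext k
  simp only [Finset.mem_Iic, Finset.mem_map, Fin.castSuccEmb_apply]
  constructor
  · intro hk
    have hk' : k.val ≤ i.val := hk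
    have hlt : k.val < m := lt_of_le_of_lt hk' i.isLt
    refine ⟨⟨k.val, hlt⟩, ?_, ?_⟩
    · exact hk'
    · ext; simp
  · rintro ⟨k', hk', rfl⟩
    exact hk'

lemma sum_adT_snoc {M : Type*} [AddCommMonoid M] (k N : ℕ) (f : (Fin (k+1) → ℕ) → M) :
    ∑ j ∈ Finset.Nat.antidiagonalTuple (k+1) N, f j
    = ∑ p ∈ Finset.HasAntidiagonal.antidiagonal N, ∑ j ∈ Finset.Nat.antidiagonalTuple k p.1,
        f (Fin.snoc j p.2) := by
  rw [← Finset.sum_sigma (Finset.HasAntidiagonal.antidiagonal N) (fun p => Finset.Nat.antidiagonalTuple k p.1)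
      (fun q => f (Fin.snoc q.2 q.1.2))]
  apply Finset.sum_nbij' (i := fun j => (⟨(∑ i : Fin k, j i.castSucc, j (Fin.last k)), Fin.init j⟩ :
      (p : ℕ × ℕ) × (Fin k → ℕ)))
    (j := fun q => Fin.snoc q.2 q.1.2)
  · intro j hj
    rw [Finset.Nat.mem_antidiagonalTuple] at hj
    simp only [Finset.mem_sigma, Finset.HasAntidiagonal.mem_antidiagonal, Finset.Nat.mem_antidiagonalTuple]
    constructor
    · rw [← hj, Fin.sum_univ_castSucc]
    · rfl
  · intro q hq
    simp only [Finset.mem_sigma, Finset.HasAntidiagonal.mem_antidiagonal, Finset.Nat.mem_antidiagonalTuple] at hq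
    rw [Finset.Nat.mem_antidiagonalTuple, Fin.sum_univ_castSucc]
    simp [Fin.snoc_castSucc, Fin.snoc_last, hq.2, hq.1]
  · intro j hj
    simp [Fin.snoc_init_self]
  · intro q hq
    simp only [Fin.init_snoc, Fin.snoc_last, Fin.snoc_castSucc]
    congr 1
    simp only [Finset.mem_sigma, Finset.HasAntidiagonal.mem_antidiagonal, Finset.Nat.mem_antidiagonalTuple] at hq
    ext <;> simp [hq.2]
  · intro j hj
    simp [Fin.snoc_init_self]


lemma Iic_succ_fin {m : ℕ} (t : ℕ) (ht : t + 1 < m + 1) (ht' : t < m + 1) :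
    Finset.Iic (⟨t+1, ht⟩ : Fin (m+1)) = insert ⟨t+1, ht⟩ (Finset.Iic ⟨t, ht'⟩) := by
  ext k
  simp only [Finset.mem_Iic, Finset.mem_insert, Fin.le_def, Fin.ext_iff]
  omega

lemma exists_sum_eq {m : ℕ} (j : Fin (m+1) → ℕ)
    (h : ∃ i : Fin (m+1), ∑ k ∈ Finset.Iic i, j k ≤ i.val) :
    ∃ i : Fin (m+1), ∑ k ∈ Finset.Iic i, j k = i.val := by
  obtain ⟨i, hi⟩ := h
  have key : ∀ t (ht : t < m + 1),
      (∑ k ∈ Finset.Iic (⟨t, ht⟩ : Fin (m+1)), j k ≤ t) →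
      ∃ i : Fin (m+1), ∑ k ∈ Finset.Iic i, j k = i.val := by
    intro t
    induction t with
    | zero =>
      intro ht hle
      exact ⟨⟨0, ht⟩, by simp only [Fin.val_mk]; omega⟩
    | succ t ih =>
      intro ht hle
      have ht' : t < m + 1 := Nat.lt_of_succ_lt ht
      by_cases hc : ∑ k ∈ Finset.Iic (⟨t, ht'⟩ : Fin (m+1)), j k ≤ t
      · exact ih ht' hc
      · push_neg at hc
        have hins : ∑ k ∈ Finset.Iic (⟨t+1, ht⟩ : Fin (m+1)), j k
            = j ⟨t+1, ht⟩ + ∑ k ∈ Finset.Iic (⟨t, ht'⟩ : Fin (m+1)), j k := by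
          rw [Iic_succ_fin t ht ht', Finset.sum_insert (by simp [Fin.ext_iff])]
        exact ⟨⟨t+1, ht⟩, by simp only [Fin.val_mk]; omega⟩
  have : (⟨i.val, i.isLt⟩ : Fin (m+1)) = i := by ext; rfl
  exact key i.val i.isLt (by rw [this]; exact hi)

lemma vanish {m : ℕ} (j : Fin (m+1) → ℕ)
    (h : ∃ i : Fin (m+1), ∑ k ∈ Finset.Iic i, j k ≤ i.val) :
    ∏ i : Fin (m+1), ((∑ k ∈ Finset.Iic i, (j k : ℤ)) - ((i:ℕ):ℤ)) = 0 := by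
  obtain ⟨i, hi⟩ := exists_sum_eq j h
  apply Finset.prod_eq_zero (Finset.mem_univ i)
  have : (∑ k ∈ Finset.Iic i, (j k : ℤ)) = (i.val : ℤ) := by exact_mod_cast hi
  rw [this, sub_self]

lemma Iic_last_eq (m : ℕ) : Finset.Iic (Fin.last m) = Finset.univ := by
  apply Finset.eq_univ_iff_forall.mpr
  intro k
  simp [Fin.le_last]

lemma key (x : ℕ → ℤ) (m : ℕ) : ∀ N, m + 1 ≤ N →
    ∑ j ∈ Finset.Nat.antidiagonalTuple (m+1) N,
      (∏ i : Fin (m+1), Ring.multichoose (x i) (j i)) *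
        ∏ i : Fin (m+1), ((∑ k ∈ Finset.Iic i, (j k : ℤ)) - ((i:ℕ):ℤ)) =
    (∏ i ∈ Finset.range m, ((∑ t ∈ Finset.range (i+1), x t) + (i:ℤ))) *
      (((∑ t ∈ Finset.range (m+1), x t) + (m:ℤ)) *
        Ring.multichoose ((∑ t ∈ Finset.range (m+1), x t) + (m:ℤ) + 1) (N - (m+1))) := by
  induction m with
  | zero =>
    intro N hN
    cases N with
    | zero => omega
    | succ N' =>
      rw [Finset.Nat.antidiagonalTuple_one, Finset.sum_singleton]
      have hIic : Finset.Iic (0 : Fin (0+1)) = {0} := rfl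
      simp only [Fin.prod_univ_succ, Fin.prod_univ_zero, Fin.val_zero, Nat.cast_zero,
        Finset.range_zero, Finset.prod_empty, Finset.range_one, Finset.sum_singleton,
        one_mul, mul_one, Nat.add_sub_cancel, add_zero, sub_zero, hIic,
        Matrix.cons_val_zero]
      rw [Finset.sum_range_one, mul_comm]
      push_cast
      exact mc_shift (x 0) N'
  | succ m ih =>
    intro N hN
    rw [sum_adT_snoc]
    have hcongr : ∀ p ∈ Finset.HasAntidiagonal.antidiagonal N, ∀ j ∈ Finset.Nat.antidiagonalTuple (m+1) p.1,
        (∏ i : Fin (m+1+1), Ring.multichoose (x i) ((Fin.snoc j p.2 : Fin (m+1+1) → ℕ) i)) *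
          ∏ i : Fin (m+1+1), ((∑ k ∈ Finset.Iic i, ((Fin.snoc j p.2 : Fin (m+1+1) → ℕ) k : ℤ))
            - ((i:ℕ):ℤ)) =
        (Ring.multichoose (x (m+1)) p.2 * ((N:ℤ) - (m:ℤ) - 1)) *
          ((∏ i : Fin (m+1), Ring.multichoose (x i) (j i)) *
            ∏ i : Fin (m+1), ((∑ k ∈ Finset.Iic i, (j k : ℤ)) - ((i:ℕ):ℤ))) := by
      intro p hp j hj
      rw [Finset.HasAntidiagonal.mem_antidiagonal] at hp
      rw [Finset.Nat.mem_antidiagonalTuple] at hj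
      have h1 : (∏ i : Fin (m+1+1), Ring.multichoose (x i)
              ((Fin.snoc j p.2 : Fin (m+1+1) → ℕ) i))
          = (∏ i : Fin (m+1), Ring.multichoose (x i) (j i)) *
              Ring.multichoose (x (m+1)) p.2 := by
        rw [Fin.prod_univ_castSucc]
        simp [Fin.snoc_castSucc, Fin.snoc_last]
      have hcs : ∀ i : Fin (m+1), (∑ k ∈ Finset.Iic (Fin.castSucc i),
            ((Fin.snoc j p.2 : Fin (m+1+1) → ℕ) k : ℤ)) = ∑ k ∈ Finset.Iic i, (j k : ℤ) := by
        intro i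
        rw [Iic_castSucc_eq, Finset.sum_map]
        apply Finset.sum_congr rfl
        intro k _
        show ((Fin.snoc j p.2 : Fin (m+1+1) → ℕ) (Fin.castSucc k) : ℤ) = (j k : ℤ)
        rw [Fin.snoc_castSucc]
      have hlast : (∑ k ∈ Finset.Iic (Fin.last (m+1)),
            ((Fin.snoc j p.2 : Fin (m+1+1) → ℕ) k : ℤ)) = (N : ℤ) := by
        rw [Iic_last_eq, Fin.sum_univ_castSucc]
        simp only [Fin.snoc_castSucc, Fin.snoc_last]
        rw [← hp, ← hj]
        push_cast
        ring
      have h2 : (∏ i : Fin (m+1+1), ((∑ k ∈ Finset.Iic i,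
              ((Fin.snoc j p.2 : Fin (m+1+1) → ℕ) k : ℤ)) - ((i:ℕ):ℤ)))
          = (∏ i : Fin (m+1), ((∑ k ∈ Finset.Iic i, (j k : ℤ)) - ((i:ℕ):ℤ))) *
              ((N:ℤ) - (m:ℤ) - 1) := by
        rw [Fin.prod_univ_castSucc, hlast]
        simp only [Fin.val_last]
        congr 1
        · apply Finset.prod_congr rfl
          intro i _
          rw [hcs i, Fin.coe_castSucc]
        · push_cast
          ring
      rw [h1, h2]
      ring
    rw [Finset.sum_congr rfl (fun p hp => Finset.sum_congr rfl (hcongr p hp))]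
    have hinner : ∀ a : ℕ, (∑ j ∈ Finset.Nat.antidiagonalTuple (m+1) a,
        ((∏ i : Fin (m+1), Ring.multichoose (x i) (j i)) *
          ∏ i : Fin (m+1), ((∑ k ∈ Finset.Iic i, (j k : ℤ)) - ((i:ℕ):ℤ))))
        = if m + 1 ≤ a then
            (∏ i ∈ Finset.range m, ((∑ t ∈ Finset.range (i+1), x t) + (i:ℤ))) *
              (((∑ t ∈ Finset.range (m+1), x t) + (m:ℤ)) *
                Ring.multichoose ((∑ t ∈ Finset.range (m+1), x t) + (m:ℤ) + 1) (a - (m+1)))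
          else 0 := by
      intro a
      by_cases ha : m + 1 ≤ a
      · rw [if_pos ha]
        exact ih a ha
      · rw [if_neg ha]
        apply Finset.sum_eq_zero
        intro j hj
        rw [Finset.Nat.mem_antidiagonalTuple] at hj
        have hv : ∏ i : Fin (m+1), ((∑ k ∈ Finset.Iic i, (j k : ℤ)) - ((i:ℕ):ℤ)) = 0 := by
          apply vanish
          refine ⟨Fin.last m, ?_⟩
          rw [Iic_last_eq]
          simp only [Fin.val_last]
          omega
        rw [hv, mul_zero]
    rw [Finset.sum_congr rfl (fun p _ => (Finset.mul_sum _ _ _).symm)]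
    rw [Finset.sum_congr rfl (fun p _ => by rw [hinner p.1])]
    rw [Finset.Nat.sum_antidiagonal_eq_sum_range_succ_mk]
    rw [← Finset.sum_range_add_sum_Ico _ (show m+1 ≤ N+1 by omega)]
    rw [Finset.sum_eq_zero (fun k hk => by
      rw [Finset.mem_range] at hk
      rw [if_neg (by omega), mul_zero]), zero_add]
    rw [Finset.sum_Ico_eq_sum_range]
    have hNm : N + 1 - (m + 1) = N - m := by omega
    rw [hNm]
    have hterm : ∀ i ∈ Finset.range (N - m),
        Ring.multichoose (x (m+1)) (N - (m+1+i)) * ((N:ℤ) - (m:ℤ) - 1) *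
          (if m + 1 ≤ m + 1 + i then
            (∏ i ∈ Finset.range m, ((∑ t ∈ Finset.range (i+1), x t) + (i:ℤ))) *
              (((∑ t ∈ Finset.range (m+1), x t) + (m:ℤ)) *
                Ring.multichoose ((∑ t ∈ Finset.range (m+1), x t) + (m:ℤ) + 1)
                  (m + 1 + i - (m+1)))
          else 0)
        = (((N:ℤ) - (m:ℤ) - 1) *
            ((∏ i ∈ Finset.range m, ((∑ t ∈ Finset.range (i+1), x t) + (i:ℤ))) *
              ((∑ t ∈ Finset.range (m+1), x t) + (m:ℤ)))) *
          (Ring.multichoose ((∑ t ∈ Finset.range (m+1), x t) + (m:ℤ) + 1) i *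
            Ring.multichoose (x (m+1)) (N - m - 1 - i)) := by
      intro i hi
      rw [Finset.mem_range] at hi
      rw [if_pos (by omega), show m + 1 + i - (m+1) = i by omega,
        show N - (m+1+i) = N - m - 1 - i by omega]
      ring
    rw [Finset.sum_congr rfl hterm, ← Finset.mul_sum]
    have hvdm : (∑ i ∈ Finset.range (N - m),
        Ring.multichoose ((∑ t ∈ Finset.range (m+1), x t) + (m:ℤ) + 1) i *
          Ring.multichoose (x (m+1)) (N - m - 1 - i))
        = Ring.multichoose ((∑ t ∈ Finset.range (m+1), x t) + (m:ℤ) + 1 + x (m+1))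
            (N - m - 1) := by
      have hv := vandermonde (N - m - 1) ((∑ t ∈ Finset.range (m+1), x t) + (m:ℤ) + 1) (x (m+1))
      rw [Finset.Nat.sum_antidiagonal_eq_sum_range_succ_mk] at hv
      rw [show (N - m - 1).succ = N - m by omega] at hv
      exact hv
    rw [hvdm]
    -- final algebra
    have harg : (∑ t ∈ Finset.range (m+1), x t) + (m:ℤ) + 1 + x (m+1)
        = (∑ t ∈ Finset.range (m+1+1), x t) + (m:ℤ) + 1 := by
      rw [show (∑ t ∈ Finset.range (m+1+1), x t)
        = (∑ t ∈ Finset.range (m+1), x t) + x (m+1) from Finset.sum_range_succ x (m+1)]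
      ring
    rw [harg]
    have hk : N - m - 1 = (N - (m+1+1)) + 1 := by omega
    rw [hk]
    have hshift := mc_shift ((∑ t ∈ Finset.range (m+1+1), x t) + (m:ℤ) + 1) (N - (m+1+1))
    have hcast : ((N - (m+1+1) : ℕ) : ℤ) + 1 = (N:ℤ) - (m:ℤ) - 1 := by
      push_cast [Nat.cast_sub (show m+1+1 ≤ N by omega)]
      ring
    rw [hcast] at hshift
    rw [Finset.prod_range_succ]
    have harg2 : (∑ t ∈ Finset.range (m+1+1), x t) + ((m:ℕ)+1 : ℤ) + 1
        = ((∑ t ∈ Finset.range (m+1+1), x t) + (m:ℤ) + 1) + 1 := by ring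
    have harg3 : (∑ t ∈ Finset.range (m+1+1), x t) + (((m+1) : ℕ) : ℤ)
        = ((∑ t ∈ Finset.range (m+1+1), x t) + (m:ℤ) + 1) := by push_cast; ring
    rw [show (((m+1) : ℕ) : ℤ) = (m:ℤ) + 1 by push_cast; ring]
    calc ((N:ℤ) - (m:ℤ) - 1) *
            ((∏ i ∈ Finset.range m, ((∑ t ∈ Finset.range (i+1), x t) + (i:ℤ))) *
              ((∑ t ∈ Finset.range (m+1), x t) + (m:ℤ))) *
          Ring.multichoose ((∑ t ∈ Finset.range (m+1+1), x t) + (m:ℤ) + 1) (N - (m+1+1) + 1)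
        = ((∏ i ∈ Finset.range m, ((∑ t ∈ Finset.range (i+1), x t) + (i:ℤ))) *
              ((∑ t ∈ Finset.range (m+1), x t) + (m:ℤ))) *
          (((N:ℤ) - (m:ℤ) - 1) *
            Ring.multichoose ((∑ t ∈ Finset.range (m+1+1), x t) + (m:ℤ) + 1)
              (N - (m+1+1) + 1)) := by ring
      _ = ((∏ i ∈ Finset.range m, ((∑ t ∈ Finset.range (i+1), x t) + (i:ℤ))) *
              ((∑ t ∈ Finset.range (m+1), x t) + (m:ℤ))) *
          (((∑ t ∈ Finset.range (m+1+1), x t) + (m:ℤ) + 1) *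
            Ring.multichoose ((∑ t ∈ Finset.range (m+1+1), x t) + (m:ℤ) + 1 + 1)
              (N - (m+1+1))) := by rw [hshift]
      _ = (∏ i ∈ Finset.range m, ((∑ t ∈ Finset.range (i+1), x t) + (i:ℤ))) *
            ((∑ t ∈ Finset.range (m+1), x t) + (m:ℤ)) *
          (((∑ t ∈ Finset.range (m+1+1), x t) + ((m:ℤ) + 1)) *
          Ring.multichoose ((∑ t ∈ Finset.range (m+1+1), x t) + ((m:ℤ)+1) + 1)
            (N - (m+1+1))) := by
          rw [show (∑ t ∈ Finset.range (m+1+1), x t) + ((m:ℤ)+1) + 1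
            = (∑ t ∈ Finset.range (m+1+1), x t) + (m:ℤ) + 1 + 1 by ring]
          rw [show (∑ t ∈ Finset.range (m+1+1), x t) + ((m:ℤ)+1)
            = (∑ t ∈ Finset.range (m+1+1), x t) + (m:ℤ) + 1 by ring]


def xfun (s : ℕ → ℕ) (n : ℕ) : ℕ → ℤ :=
  fun t => if t = 0 then (s n : ℤ) + 1 else (s (n - t) : ℤ) - 1

namespace SPermutahedron

set_option maxHeartbeats 1000000 in
/-- (Second Lidskii-type decomposition, Eq. (5).) For a vector
`s = (s₁, …, sₙ)` of nonnegative integers,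
`∏_{i=1}^{n-1} (1 + ∑_{r=n-i+1}^n s_r)
  = ∑_j M(sₙ+1, j₁) M(sₙ₋₁-1, j₂) ⋯ M(s₂-1, j_{n-1}) ∏_{i=1}^{n-1} (j₁+⋯+jᵢ-i+1)`,
over weak compositions `j` of `n-1` dominating `(1, …, 1)`, where
`M(m, k) = C(m+k-1, k)` is the generalized multiset coefficient, interpreted
via the integer-valued polynomial extension (`Ring.multichoose` on `ℤ`). -/
theorem second_lidskii_decomposition (n : ℕ) (hn : 0 < n) (s : ℕ → ℕ) :
    (∏ i ∈ Finset.Icc 1 (n - 1), (1 + ∑ r ∈ Finset.Icc (n - i + 1) n, (s r : ℤ))) =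
      ∑ j ∈ (Finset.Nat.antidiagonalTuple (n - 1) (n - 1)).filter
          (fun j => ∀ i : Fin (n - 1), (i : ℕ) + 1 ≤ ∑ k ∈ Finset.Iic i, j k),
        (∏ i : Fin (n - 1),
            Ring.multichoose
              (if (i : ℕ) = 0 then (s n : ℤ) + 1 else (s (n - (i : ℕ)) : ℤ) - 1) (j i)) *
          ∏ i : Fin (n - 1), ((∑ k ∈ Finset.Iic i, (j k : ℤ)) - ((i : ℕ) : ℤ)) := by
  obtain ⟨m, rfl⟩ : ∃ m, n = m + 1 := ⟨n - 1, by omega⟩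
  cases m with
  | zero =>
    show (∏ i ∈ Finset.Icc 1 0, (1 + ∑ r ∈ Finset.Icc (1 - i + 1) 1, (s r : ℤ))) = _
    rw [show (1:ℕ) - 1 = 0 from rfl, Finset.Nat.antidiagonalTuple_zero_zero]
    simp
  | succ m' =>
    show (∏ i ∈ Finset.Icc 1 (m'+1), (1 + ∑ r ∈ Finset.Icc (m'+1+1 - i + 1) (m'+1+1), (s r : ℤ))) =
      ∑ j ∈ (Finset.Nat.antidiagonalTuple (m'+1) (m'+1)).filter
          (fun j => ∀ i : Fin (m'+1), (i : ℕ) + 1 ≤ ∑ k ∈ Finset.Iic i, j k),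
        (∏ i : Fin (m'+1),
            Ring.multichoose
              (if (i : ℕ) = 0 then (s (m'+1+1) : ℤ) + 1
                else (s (m'+1+1 - (i : ℕ)) : ℤ) - 1) (j i)) *
          ∏ i : Fin (m'+1), ((∑ k ∈ Finset.Iic i, (j k : ℤ)) - ((i : ℕ) : ℤ))
    have haux : ∀ i' : ℕ, i' ≤ m' →
        (∑ t ∈ Finset.range (i'+1), xfun s (m'+1+1) t) + (i':ℤ)
          = 1 + ∑ r ∈ Finset.Icc (m'+1+1 - i') (m'+1+1), (s r : ℤ) := by
      intro i'
      induction i' with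
      | zero =>
        intro _
        rw [Finset.sum_range_one, show Finset.Icc (m'+1+1-0) (m'+1+1) = {m'+1+1} by
          rw [Nat.sub_zero, Finset.Icc_self], Finset.sum_singleton]
        simp [xfun]
        ring
      | succ i' ihaux =>
        intro hle
        have h1 : Finset.Icc (m'+1+1 - (i'+1)) (m'+1+1)
            = insert (m'+1+1 - (i'+1)) (Finset.Icc (m'+1+1 - i') (m'+1+1)) := by
          ext r
          simp only [Finset.mem_Icc, Finset.mem_insert]
          omega
        have h2 : (m'+1+1 - (i'+1)) ∉ Finset.Icc (m'+1+1 - i') (m'+1+1) := by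
          simp only [Finset.mem_Icc]
          omega
        have h3 := ihaux (by omega)
        have hxi : xfun s (m'+1+1) (i'+1) = (s (m'+1+1 - (i'+1)) : ℤ) - 1 := by
          simp [xfun]
        rw [h1, Finset.sum_insert h2, Finset.sum_range_succ, hxi]
        push_cast
        push_cast at h3
        linarith [h3]
    -- drop the filter
    rw [Finset.sum_filter_of_ne (fun j _ hne => by
      intro i
      by_contra hcon
      apply hne
      rw [vanish j ⟨i, by omega⟩, mul_zero])]
    -- apply key
    have hkey : (∑ j ∈ (Finset.Nat.antidiagonalTuple (m'+1) (m'+1)),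
        (∏ i : Fin (m'+1), Ring.multichoose
          (if (i : ℕ) = 0 then (s (m'+1+1) : ℤ) + 1 else (s (m'+1+1 - (i:ℕ)) : ℤ) - 1) (j i)) *
          ∏ i : Fin (m'+1), ((∑ k ∈ Finset.Iic i, (j k : ℤ)) - ((i : ℕ) : ℤ)))
        = (∏ i ∈ Finset.range m', ((∑ t ∈ Finset.range (i+1), xfun s (m'+1+1) t) + (i:ℤ))) *
          (((∑ t ∈ Finset.range (m'+1), xfun s (m'+1+1) t) + (m':ℤ)) *
            Ring.multichoose ((∑ t ∈ Finset.range (m'+1), xfun s (m'+1+1) t) + (m':ℤ) + 1)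
              ((m'+1) - (m'+1))) := key (xfun s (m'+1+1)) m' (m'+1) (le_refl _)
    rw [hkey, Nat.sub_self, Ring.multichoose_zero_right, mul_one, ← Finset.prod_range_succ]
    clear hkey
    -- identify the factors
    -- reindex the LHS product
    rw [← Finset.Ico_add_one_right_eq_Icc, Finset.prod_Ico_eq_prod_range]
    rw [show m' + 1 + 1 - 1 = m' + 1 by omega]
    apply Finset.prod_congr rfl
    intro i hi
    rw [Finset.mem_range] at hi
    rw [haux i (by omega)]
    clear haux
    have : m' + 1 + 1 - (1 + i) + 1 = m' + 1 + 1 - i := by omega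
    rw [this]


end SPermutahedron
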